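/- Let λ ∈ ℝ with λ ∉ ℤ_{≥0}, and for an integer j ≥ 1 set P_j(λ) = ∏_{i=1}^j i·(λ − i + 1). Then P_j(λ) ≠ 0, and: (i) if λ < 0 then sign(P_j(λ)) = (−1)^j; (ii) if λ > 0 and j ≤ ⌊λ⌋ then sign(P_j(λ)) = 1; (iii) if λ > 0 and j ≥ ⌈λ⌉ then sign(P_j(λ)) = (−1)^{j+⌈λ⌉}. (Here sign(x) = x/|x| for x ≠ 0.) -/

import Mathlib

lemma neg_prod_aux (lam : ℝ) (c : ℕ) (h : ∀ i : ℕ, c < i → lam - i + 1 < 0) :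
    ∀ k : ℕ, 0 < (-1 : ℝ) ^ k * ∏ i ∈ Finset.Ioc c (c + k), ((i : ℝ) * (lam - i + 1)) := by
  intro k
  induction k with
  | zero => simp
  | succ k ih =>
    rw [show c + (k + 1) = (c + k) + 1 from rfl,
      Finset.prod_Ioc_succ_top (Nat.le_add_right c k)]
    have hf : (((c + k + 1 : ℕ) : ℝ)) * (lam - ((c + k + 1 : ℕ) : ℝ) + 1) < 0 :=
      mul_neg_of_pos_of_neg (by positivity) (h _ (by omega))
    have h2 := mul_pos ih (neg_pos.2 hf)
    rw [pow_succ]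
    nlinarith [h2]

lemma sign_of_pow_mul (k : ℕ) (x : ℝ) (h : 0 < (-1 : ℝ) ^ k * x) :
    Real.sign x = (-1 : ℝ) ^ k := by
  rcases Nat.even_or_odd k with he | ho
  · rw [he.neg_one_pow] at h ⊢
    rw [one_mul] at h
    exact Real.sign_of_pos h
  · rw [ho.neg_one_pow] at h ⊢
    exact Real.sign_of_neg (by linarith)

/-- For generic `λ` (not a nonnegative integer) and `j ≥ 1`, the Shapovalov
norm `P_j(λ) = ∏_{i=1}^j i·(λ − i + 1)` is nonzero, and its sign is as described. -/
theorem stmt_0 (lam : ℝ) (hlam : ∀ n : ℕ, lam ≠ n) (j : ℕ) (hj : 1 ≤ j) :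
    (∏ i ∈ Finset.Icc 1 j, (i : ℝ) * (lam - i + 1)) ≠ 0 ∧
    (lam < 0 →
      Real.sign (∏ i ∈ Finset.Icc 1 j, (i : ℝ) * (lam - i + 1)) = (-1 : ℝ) ^ j) ∧
    (0 < lam → (j : ℤ) ≤ ⌊lam⌋ →
      Real.sign (∏ i ∈ Finset.Icc 1 j, (i : ℝ) * (lam - i + 1)) = 1) ∧
    (0 < lam → ⌈lam⌉ ≤ (j : ℤ) →
      Real.sign (∏ i ∈ Finset.Icc 1 j, (i : ℝ) * (lam - i + 1)) =
        (-1 : ℝ) ^ ((j : ℤ) + ⌈lam⌉)) := by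
  have hIcc : Finset.Icc 1 j = Finset.Ioc 0 j := by
    rw [← Finset.Icc_add_one_left_eq_Ioc, zero_add]
  refine ⟨?_, ?_, ?_, ?_⟩
  · -- nonzero
    rw [Finset.prod_ne_zero_iff]
    intro i hi
    simp only [Finset.mem_Icc] at hi
    have hi1 : 1 ≤ i := hi.1
    have hne : lam - (i : ℝ) + 1 ≠ 0 := by
      intro hz
      apply hlam (i - 1)
      have : ((i - 1 : ℕ) : ℝ) = (i : ℝ) - 1 := by
        push_cast [hi1]; ring
      rw [this]
      linarith
    exact mul_ne_zero (by positivity) hne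
  · -- lam < 0
    intro hneg
    rw [hIcc]
    have := neg_prod_aux lam 0 (fun i hi => by
      have : (1 : ℝ) ≤ (i : ℝ) := by exact_mod_cast hi
      linarith) j
    rw [zero_add] at this
    exact sign_of_pow_mul j _ this
  · -- 0 < lam, j ≤ ⌊lam⌋
    intro _ hjf
    apply Real.sign_of_pos
    apply Finset.prod_pos
    intro i hi
    simp only [Finset.mem_Icc] at hi
    have h1 : (i : ℤ) ≤ ⌊lam⌋ := le_trans (by exact_mod_cast hi.2) hjf
    have h2 : (i : ℝ) ≤ lam := by
      have := Int.le_floor.mp h1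
      exact_mod_cast this
    have : (0 : ℝ) < i := by exact_mod_cast hi.1
    nlinarith
  · -- 0 < lam, ⌈lam⌉ ≤ j
    intro hpos hcj
    set c : ℕ := ⌈lam⌉.toNat with hc
    have hcz : (c : ℤ) = ⌈lam⌉ := Int.toNat_of_nonneg (by positivity)
    have hcp : 0 < ⌈lam⌉ := Int.ceil_pos.mpr hpos
    have hc1 : 1 ≤ c := by omega
    have hcle : c ≤ j := by exact_mod_cast (by omega : (c : ℤ) ≤ (j : ℤ))
    have hceil : lam ≤ (c : ℝ) := by
      have := Int.le_ceil lam
      rw [← hcz] at this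
      exact_mod_cast this
    have hlc : lam < (c : ℝ) := lt_of_le_of_ne hceil (hlam c)
    set k : ℕ := j - c with hk
    have hjk : c + k = j := by omega
    -- split the product
    rw [hIcc, ← hjk, ← Finset.prod_Ioc_consecutive _ (Nat.zero_le c) (Nat.le_add_right c k)]
    have hA : 0 < ∏ i ∈ Finset.Ioc 0 c, ((i : ℝ) * (lam - i + 1)) := by
      apply Finset.prod_pos
      intro i hi
      simp only [Finset.mem_Ioc] at hi
      have h1 : (0 : ℝ) < i := by exact_mod_cast hi.1
      have h2 : (i : ℝ) ≤ c := by exact_mod_cast hi.2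
      have h3 : (c : ℝ) < lam + 1 := by
        have := Int.ceil_lt_add_one lam
        rw [← hcz] at this
        exact_mod_cast this
      nlinarith
    have hB := neg_prod_aux lam c (fun i hi => by
      have : (c : ℝ) + 1 ≤ (i : ℝ) := by exact_mod_cast hi
      linarith) k
    have hAB : 0 < (-1 : ℝ) ^ k *
        ((∏ i ∈ Finset.Ioc 0 c, ((i : ℝ) * (lam - i + 1))) *
         ∏ i ∈ Finset.Ioc c (c + k), ((i : ℝ) * (lam - i + 1))) := by
      nlinarith [mul_pos hA hB]
    have hsign := sign_of_pow_mul k _ hAB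
    rw [hsign]
    have hexp : ((c + k : ℕ) : ℤ) + ⌈lam⌉ = (k : ℤ) + 2 * (c : ℤ) := by push_cast; omega
    rw [hexp, zpow_add₀ (by norm_num : (-1 : ℝ) ≠ 0), zpow_natCast]
    have : (-1 : ℝ) ^ (2 * (c : ℤ)) = 1 := by
      rw [zpow_mul]
      norm_num
    rw [this, mul_one]
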